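/- Let A be a bounded operator on a Hilbert space such that 1 - A - A* is positive definite (i.e., bounded below by a positive multiple of the identity). Then 1 - A is invertible. -/

import Mathlib

open ContinuousLinearMap ComplexInnerProductSpace in
theorem stmt0 {H : Type*} [NormedAddCommGroup H] [InnerProductSpace ℂ H] [CompleteSpace H]
    (A : H →L[ℂ] H)
    (hpos : ∃ c : ℝ, 0 < c ∧ ∀ x : H,
      c * ‖x‖ ^ 2 ≤ (inner ℂ (((1 : H →L[ℂ] H) - A - adjoint A) x) x : ℂ).re) :
    IsUnit ((1 : H →L[ℂ] H) - A) := by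
  obtain ⟨c, hc, h⟩ := hpos
  set T : H →L[ℂ] H := (1 : H →L[ℂ] H) - A with hT
  -- coercivity of T
  have hco : ∀ x : H, (c / 2) * ‖x‖ ^ 2 ≤ (inner ℂ (T x) x : ℂ).re := by
    intro x
    have h1 := h x
    have hA : (inner ℂ ((adjoint A) x) x : ℂ).re = (inner ℂ (A x) x : ℂ).re := by
      rw [ContinuousLinearMap.adjoint_inner_left]
      exact inner_re_symm (𝕜 := ℂ) x (A x)
    have e1 : (inner ℂ (((1 : H →L[ℂ] H) - A - adjoint A) x) x : ℂ).re
        = ‖x‖ ^ 2 - (inner ℂ (A x) x : ℂ).re - (inner ℂ ((adjoint A) x) x : ℂ).re := by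
      simp only [ContinuousLinearMap.sub_apply, ContinuousLinearMap.one_apply,
        inner_sub_left, Complex.sub_re]
      rw [inner_self_eq_norm_sq_to_K (𝕜 := ℂ) x]
      simp [← Complex.ofReal_pow]
    have e2 : (inner ℂ (T x) x : ℂ).re = ‖x‖ ^ 2 - (inner ℂ (A x) x : ℂ).re := by
      simp only [hT, ContinuousLinearMap.sub_apply, ContinuousLinearMap.one_apply,
        inner_sub_left, Complex.sub_re]
      rw [inner_self_eq_norm_sq_to_K (𝕜 := ℂ) x]
      simp [← Complex.ofReal_pow]
    rw [e1, hA] at h1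
    rw [e2]
    nlinarith [sq_nonneg ‖x‖]
  have hc2 : (0:ℝ) < c / 2 := by linarith
  -- norm lower bound
  have hbound : ∀ x : H, (c / 2) * ‖x‖ ≤ ‖T x‖ := by
    intro x
    rcases eq_or_ne x 0 with rfl | hx
    · simp
    · have hxpos : 0 < ‖x‖ := norm_pos_iff.mpr hx
      have h1 : (c / 2) * ‖x‖ ^ 2 ≤ ‖T x‖ * ‖x‖ := by
        calc (c / 2) * ‖x‖ ^ 2 ≤ (inner ℂ (T x) x : ℂ).re := hco x
        _ ≤ ‖inner ℂ (T x) x‖ := le_trans (Complex.re_le_norm _) le_rfl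
        _ ≤ ‖T x‖ * ‖x‖ := norm_inner_le_norm _ _
      have := mul_le_mul_of_nonneg_right h1 (le_of_lt (inv_pos.mpr hxpos))
      calc (c/2) * ‖x‖ = (c/2) * ‖x‖^2 * ‖x‖⁻¹ := by field_simp
      _ ≤ ‖T x‖ * ‖x‖ * ‖x‖⁻¹ := this
      _ = ‖T x‖ := by field_simp
  -- antilipschitz
  have hanti : AntilipschitzWith ((Real.toNNReal (c/2))⁻¹) T := by
    apply T.antilipschitz_of_bound
    intro x
    rw [NNReal.coe_inv, Real.coe_toNNReal _ hc2.le, le_inv_mul_iff₀ (by exact_mod_cast hc2)]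
    exact_mod_cast hbound x
  have hinj : T.ker = ⊥ := by
    exact LinearMap.ker_eq_bot_of_injective hanti.injective
  -- closed range
  have hclosed : IsClosed (T.range : Set H) :=
    hanti.isClosed_range T.uniformContinuous
  haveI : CompleteSpace T.range := hclosed.completeSpace_coe
  -- surjectivity
  have hsurj : T.range = ⊤ := by
    rw [← Submodule.orthogonal_eq_bot_iff]
    rw [Submodule.eq_bot_iff]
    intro y hy
    have hyT : (inner ℂ (T y) y : ℂ) = 0 :=
      (Submodule.mem_orthogonal _ y).mp hy (T y) ⟨y, rfl⟩
    have := hco y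
    rw [hyT] at this
    simp only [Complex.zero_re] at this
    have : ‖y‖ ^ 2 ≤ 0 := by nlinarith
    have : ‖y‖ = 0 := by nlinarith [sq_nonneg ‖y‖, norm_nonneg y]
    exact norm_eq_zero.mp this
  let e : H ≃L[ℂ] H := ContinuousLinearEquiv.ofBijective T hinj hsurj
  have he : (e : H →L[ℂ] H) = T := ContinuousLinearEquiv.coe_ofBijective T hinj hsurj
  exact ⟨(ContinuousLinearEquiv.unitsEquiv ℂ H).symm e, by rw [← he]; rfl⟩
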